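/- arXiv:2201.09046 — 4 statements merged into one kernel-verified Lean document; each statement's English description precedes it below -/
import Mathlib

section
/- Let h : ℝ^d → ℝ be a differentiable function attaining its minimum, and suppose h satisfies the Polyak–Łojasiewicz condition with constant μ > 0, i.e. for all w, (1/2)‖∇h(w)‖² ≥ μ (h(w) − inf h). Then for every w with h(w) > inf h, there exists a point w* with h(w*) = inf h such that h(w) − inf h ≥ (μ/2) ‖w − w*‖², provided h is L-smooth (gradient L-Lipschitz). -/
open RealInnerProductSpace

lemma smooth_descent {F : Type*} [NormedAddCommGroup F] [InnerProductSpace ℝ F]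
    [CompleteSpace F] (f : F → ℝ) (L : ℝ) (hdiff : Differentiable ℝ f)
    (hlip : ∀ x y, ‖gradient f x - gradient f y‖ ≤ L * ‖x - y‖) (x v : F) :
    f (x + v) ≤ f x + ⟪gradient f x, v⟫ + L / 2 * ‖v‖ ^ 2 := by
  set c1 : ℝ := ⟪gradient f x, v⟫ with hc1
  set c2 : ℝ := L / 2 * ‖v‖ ^ 2 with hc2
  set φ : ℝ → ℝ := fun t => f (x + t • v) - t * c1 - c2 * t ^ 2 with hφdef
  have key : ∀ t : ℝ, HasDerivAt (fun t : ℝ => f (x + t • v))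
      ⟪gradient f (x + t • v), v⟫ t := by
    intro t
    have hc : HasDerivAt (fun t : ℝ => x + t • v) v t := by
      simpa using ((hasDerivAt_id t).smul_const v).const_add x
    have hf := (hdiff (x + t • v)).hasGradientAt.hasFDerivAt
    have := hf.comp_hasDerivAt t hc
    simpa [InnerProductSpace.toDual_apply_apply, Function.comp_def] using this
  have hφ : ∀ t : ℝ, HasDerivAt φ
      (⟪gradient f (x + t • v), v⟫ - c1 - c2 * (2 * t)) t := by
    intro t
    have h1 := (key t).sub ((hasDerivAt_id t).mul_const c1)
    have h2 : HasDerivAt (fun t : ℝ => c2 * t ^ 2) (c2 * (2 * t)) t := by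
      simpa [mul_comm] using (hasDerivAt_pow 2 t).const_mul c2
    simpa [hφdef, Pi.sub_def] using h1.sub h2
  have hnonpos : ∀ t ∈ interior (Set.Icc (0:ℝ) 1), deriv φ t ≤ 0 := by
    intro t ht
    rw [interior_Icc, Set.mem_Ioo] at ht
    rw [(hφ t).deriv]
    have hip : ⟪gradient f (x + t • v), v⟫ - c1 = ⟪gradient f (x + t • v) - gradient f x, v⟫ := by
      rw [inner_sub_left]
    have hb : ⟪gradient f (x + t • v) - gradient f x, v⟫ ≤ L * t * ‖v‖ ^ 2 := by
      calc ⟪gradient f (x + t • v) - gradient f x, v⟫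
          ≤ ‖gradient f (x + t • v) - gradient f x‖ * ‖v‖ := real_inner_le_norm _ _
        _ ≤ (L * ‖(x + t • v) - x‖) * ‖v‖ := by
            gcongr; exact hlip _ _
        _ = L * t * ‖v‖ ^ 2 := by
            simp [norm_smul, abs_of_pos ht.1]; ring
    have : c2 * (2 * t) = L * t * ‖v‖ ^ 2 := by rw [hc2]; ring
    linarith [hip ▸ hb]
  have hcont : ContinuousOn φ (Set.Icc (0:ℝ) 1) := by
    apply Continuous.continuousOn
    have hfc := hdiff.continuous
    simp only [hφdef]
    fun_prop
  have hdiffφ : DifferentiableOn ℝ φ (interior (Set.Icc (0:ℝ) 1)) :=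
    fun t _ => ((hφ t).differentiableAt).differentiableWithinAt
  have hanti := antitoneOn_of_deriv_nonpos (convex_Icc 0 1) hcont hdiffφ hnonpos
  have h01 := hanti (Set.left_mem_Icc.2 zero_le_one) (Set.right_mem_Icc.2 zero_le_one) zero_le_one
  simp only [hφdef] at h01
  simp at h01
  linarith

lemma arith_step (η b r G sk sk1 : ℝ) (hη : 0 < η) (hb : 0 < b) (hr : 0 < r)
    (hG0 : 0 ≤ G) (h1 : η * b * G ^ 2 ≤ sk ^ 2 - sk1 ^ 2) (h2 : r * sk ≤ G)
    (hd : 0 ≤ sk - sk1) :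
    η * G ≤ 2 / (b * r) * (sk - sk1) := by
  rcases eq_or_lt_of_le hG0 with hGz | hGpos
  · rw [← hGz]
    have : 0 ≤ 2 / (b * r) * (sk - sk1) := by positivity
    linarith
  · rw [div_mul_eq_mul_div, le_div_iff₀ (by positivity)]
    have key : η * G * (b * r) * G ≤ 2 * (sk - sk1) * G := by
      have e3 : sk ^ 2 - sk1 ^ 2 ≤ 2 * sk * (sk - sk1) := by
        nlinarith [sq_nonneg (sk - sk1)]
      calc η * G * (b * r) * G = (η * b * G ^ 2) * r := by ring
        _ ≤ (sk ^ 2 - sk1 ^ 2) * r := mul_le_mul_of_nonneg_right h1 hr.le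
        _ ≤ (2 * sk * (sk - sk1)) * r := mul_le_mul_of_nonneg_right e3 hr.le
        _ = (r * sk) * (2 * (sk - sk1)) := by ring
        _ ≤ G * (2 * (sk - sk1)) := mul_le_mul_of_nonneg_right h2 (by linarith)
        _ = 2 * (sk - sk1) * G := by ring
    exact le_of_mul_le_mul_right key hGpos

lemma gd_reach {F : Type*} [NormedAddCommGroup F] [InnerProductSpace ℝ F]
    [CompleteSpace F] (h : F → ℝ) (μ L : ℝ) (hμ : 0 < μ) (hL : 0 < L)
    (hdiff : Differentiable ℝ h)
    (hsmooth : ∀ x y, ‖gradient h x - gradient h y‖ ≤ L * ‖x - y‖)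
    (w0 : F) (hmin : ∀ w, h w0 ≤ h w)
    (hPL : ∀ w, μ * (h w - h w0) ≤ (1 / 2) * ‖gradient h w‖ ^ 2)
    (η : ℝ) (hη : 0 < η) (hηL : L * η ≤ 1) (hημ : 2 * μ * η ≤ 1) (w : F) :
    ∃ z, h z = h w0 ∧
      ‖w - z‖ ≤ 2 / ((1 - L * η / 2) * Real.sqrt (2 * μ)) * Real.sqrt (h w - h w0) := by
  set b : ℝ := 1 - L * η / 2 with hbdef
  have hb : 0 < b := by rw [hbdef]; nlinarith
  have hb1 : b ≤ 1 := by rw [hbdef]; nlinarith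
  set a : ℝ := η * b with hadef
  have ha : 0 < a := mul_pos hη hb
  have haη : a ≤ η := by nlinarith
  set r : ℝ := Real.sqrt (2 * μ) with hrdef
  have hr : 0 < r := Real.sqrt_pos.2 (by positivity)
  set C : ℝ := 2 / (b * r) with hCdef
  have hC : 0 < C := by positivity
  set T : F → F := fun y => y - η • gradient h y with hTdef
  set x : ℕ → F := fun k => T^[k] w with hxdef
  have hx0 : x 0 = w := rfl
  have hxsucc : ∀ k, x (k + 1) = T (x k) := by
    intro k; simp [hxdef, Function.iterate_succ_apply']
  set Δ : ℕ → ℝ := fun k => h (x k) - h w0 with hΔdef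
  set s : ℕ → ℝ := fun k => Real.sqrt (Δ k) with hsdef
  have hΔ0 : ∀ k, 0 ≤ Δ k := fun k => sub_nonneg.2 (hmin _)
  have hs2 : ∀ k, s k ^ 2 = Δ k := fun k => Real.sq_sqrt (hΔ0 k)
  have hs0 : ∀ k, 0 ≤ s k := fun k => Real.sqrt_nonneg _
  -- descent step
  have hstep : ∀ y : F, h (T y) ≤ h y - a * ‖gradient h y‖ ^ 2 := by
    intro y
    have := smooth_descent h L hdiff hsmooth y (-η • gradient h y)
    have hi : ⟪gradient h y, -η • gradient h y⟫ = -η * ‖gradient h y‖ ^ 2 := by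
      rw [real_inner_smul_right, real_inner_self_eq_norm_sq]
    have hn : ‖-η • gradient h y‖ ^ 2 = η ^ 2 * ‖gradient h y‖ ^ 2 := by
      rw [norm_smul]; simp [abs_of_pos hη]; ring
    have hTy : T y = y + -η • gradient h y := by
      rw [hTdef]; simp [sub_eq_add_neg]
    rw [hTy]
    rw [hi, hn] at this
    calc h (y + -η • gradient h y) ≤ h y + -η * ‖gradient h y‖ ^ 2
          + L / 2 * (η ^ 2 * ‖gradient h y‖ ^ 2) := this
      _ = h y - a * ‖gradient h y‖ ^ 2 := by rw [hadef, hbdef]; ring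
  have hdesc : ∀ k, Δ (k + 1) + a * ‖gradient h (x k)‖ ^ 2 ≤ Δ k := by
    intro k
    have := hstep (x k)
    rw [← hxsucc k] at this
    simp only [hΔdef]; linarith
  have hpl : ∀ k, 2 * μ * Δ k ≤ ‖gradient h (x k)‖ ^ 2 := by
    intro k; have := hPL (x k); simp only [hΔdef]; linarith
  set q : ℝ := 1 - 2 * μ * a with hqdef
  have hq0 : 0 ≤ q := by rw [hqdef]; nlinarith
  have hq1 : q < 1 := by rw [hqdef]; nlinarith
  have hΔq : ∀ k, Δ (k + 1) ≤ q * Δ k := by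
    intro k
    have h1 := hdesc k
    have h2 := hpl k
    have h3 : 0 ≤ a := ha.le
    nlinarith
  have hΔmono : ∀ k, Δ (k + 1) ≤ Δ k := by
    intro k
    have := hΔq k
    nlinarith [hΔ0 k]
  have hsmono : ∀ k, s (k + 1) ≤ s k := fun k => Real.sqrt_le_sqrt (hΔmono k)
  -- geometric decay of Δ
  have hΔgeo : ∀ k, Δ k ≤ q ^ k * Δ 0 := by
    intro k
    induction k with
    | zero => simp
    | succ n ih =>
      calc Δ (n + 1) ≤ q * Δ n := hΔq n
        _ ≤ q * (q ^ n * Δ 0) := by nlinarith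
        _ = q ^ (n + 1) * Δ 0 := by ring
  have hsqrtpow : ∀ k : ℕ, Real.sqrt (q ^ k) = Real.sqrt q ^ k := by
    intro k
    induction k with
    | zero => simp
    | succ n ih => rw [pow_succ, pow_succ, Real.sqrt_mul (pow_nonneg hq0 n), ih]
  have hsgeo : ∀ k, s k ≤ (Real.sqrt q) ^ k * s 0 := by
    intro k
    have h5 : s k ≤ Real.sqrt (q ^ k * Δ 0) := Real.sqrt_le_sqrt (hΔgeo k)
    rw [Real.sqrt_mul (by positivity), hsqrtpow] at h5
    exact h5
  -- step length bound
  have hsteplen : ∀ k, ‖x k - x (k + 1)‖ ≤ C * (s k - s (k + 1)) := by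
    intro k
    have hxd : x k - x (k + 1) = η • gradient h (x k) := by
      rw [hxsucc k, hTdef]; simp
    rw [hxd, norm_smul, Real.norm_eq_abs, abs_of_pos hη]
    set G : ℝ := ‖gradient h (x k)‖ with hGdef
    have hG0 : 0 ≤ G := norm_nonneg _
    have h1 : a * G ^ 2 ≤ s k ^ 2 - s (k + 1) ^ 2 := by
      rw [hs2, hs2]; linarith [hdesc k]
    have h2 : r * s k ≤ G := by
      have h6 : Real.sqrt (2 * μ * Δ k) ≤ Real.sqrt (G ^ 2) := Real.sqrt_le_sqrt (hpl k)
      rw [Real.sqrt_mul (by positivity), Real.sqrt_sq hG0] at h6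
      exact h6
    have hd0 : 0 ≤ s k - s (k + 1) := sub_nonneg.2 (hsmono k)
    have h1' : η * b * G ^ 2 ≤ s k ^ 2 - s (k + 1) ^ 2 := by rw [← hadef]; exact h1
    have := arith_step η b r G (s k) (s (k + 1)) hη hb hr hG0 h1' h2 hd0
    calc η * G ≤ 2 / (b * r) * (s k - s (k + 1)) := this
      _ = C * (s k - s (k + 1)) := by rw [hCdef]
  -- telescoping
  have htel : ∀ m, ‖x 0 - x m‖ ≤ C * (s 0 - s m) := by
    intro m
    induction m with
    | zero => simp
    | succ n ih =>
      calc ‖x 0 - x (n + 1)‖ ≤ ‖x 0 - x n‖ + ‖x n - x (n + 1)‖ := by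
            simpa using norm_sub_le_norm_sub_add_norm_sub (x 0) (x n) (x (n + 1))
        _ ≤ C * (s 0 - s n) + C * (s n - s (n + 1)) := add_le_add ih (hsteplen n)
        _ = C * (s 0 - s (n + 1)) := by ring
  -- Cauchy
  have hrq : Real.sqrt q < 1 := by
    rw [show (1 : ℝ) = Real.sqrt 1 by simp]
    exact Real.sqrt_lt_sqrt hq0 hq1
  have hcauchy : CauchySeq x := by
    apply cauchySeq_of_le_geometric (Real.sqrt q) (C * s 0) hrq
    intro k
    rw [dist_eq_norm]
    calc ‖x k - x (k + 1)‖ ≤ C * (s k - s (k + 1)) := hsteplen k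
      _ ≤ C * s k := mul_le_mul_of_nonneg_left (sub_le_self _ (hs0 (k + 1))) hC.le
      _ ≤ C * ((Real.sqrt q) ^ k * s 0) := mul_le_mul_of_nonneg_left (hsgeo k) hC.le
      _ = C * s 0 * (Real.sqrt q) ^ k := by ring
  obtain ⟨z, hz⟩ := cauchySeq_tendsto_of_complete hcauchy
  refine ⟨z, ?_, ?_⟩
  · -- h z = h w0
    have hΔlim : Filter.Tendsto Δ Filter.atTop (nhds 0) := by
      apply squeeze_zero hΔ0 hΔgeo
      simpa using (tendsto_pow_atTop_nhds_zero_of_lt_one hq0 hq1).mul_const (Δ 0)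
    have h1 : Filter.Tendsto (fun k => h (x k)) Filter.atTop (nhds (h w0)) := by
      have : Filter.Tendsto (fun k => Δ k + h w0) Filter.atTop (nhds (0 + h w0)) :=
        hΔlim.add_const _
      simpa [hΔdef] using this
    have h2 : Filter.Tendsto (fun k => h (x k)) Filter.atTop (nhds (h z)) :=
      (hdiff.continuous.tendsto z).comp hz
    exact tendsto_nhds_unique h2 h1
  · -- distance bound
    have hbound : ∀ m, ‖w - x m‖ ≤ C * s 0 := by
      intro m
      rw [← hx0]
      calc ‖x 0 - x m‖ ≤ C * (s 0 - s m) := htel m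
        _ ≤ C * s 0 := mul_le_mul_of_nonneg_left (sub_le_self _ (hs0 m)) hC.le
    have hlim : Filter.Tendsto (fun m => ‖w - x m‖) Filter.atTop (nhds ‖w - z‖) :=
      ((continuous_const.sub continuous_id).norm.tendsto z).comp hz
    have := le_of_tendsto hlim (Filter.Eventually.of_forall hbound)
    have hs0eq : s 0 = Real.sqrt (h w - h w0) := by rw [hsdef]; simp [hΔdef, hx0]
    rw [hCdef, hrdef] at this
    rw [← hs0eq]
    exact this

/-- PL condition implies quadratic growth (for L-smooth differentiable functions
attaining their minimum). -/
theorem pl_implies_quadratic_growth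
    {d : ℕ} (h : EuclideanSpace ℝ (Fin d) → ℝ) (μ L : ℝ)
    (hμ : 0 < μ) (hL : 0 < L)
    (hdiff : Differentiable ℝ h)
    (hsmooth : ∀ x y, ‖gradient h x - gradient h y‖ ≤ L * ‖x - y‖)
    (w0 : EuclideanSpace ℝ (Fin d)) (hmin : ∀ w, h w0 ≤ h w)
    (hPL : ∀ w, μ * (h w - h w0) ≤ (1 / 2) * ‖gradient h w‖ ^ 2) :
    ∀ w, h w0 < h w →
      ∃ wstar, h wstar = h w0 ∧ (μ / 2) * ‖w - wstar‖ ^ 2 ≤ h w - h w0 := by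
  have sd : ∀ (x v : EuclideanSpace ℝ (Fin d)),
      h (x + v) ≤ h x + ⟪gradient h x, v⟫ + L / 2 * ‖v‖ ^ 2 :=
    smooth_descent h L hdiff hsmooth
  have gr : ∀ (η : ℝ), 0 < η → L * η ≤ 1 → 2 * μ * η ≤ 1 →
      ∀ w : EuclideanSpace ℝ (Fin d), ∃ z, h z = h w0 ∧
        ‖w - z‖ ≤ 2 / ((1 - L * η / 2) * Real.sqrt (2 * μ)) * Real.sqrt (h w - h w0) :=
    fun η h1 h2 h3 => gd_reach h μ L hμ hL hdiff hsmooth w0 hmin hPL η h1 h2 h3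
  intro w hw
  have hΔpos : 0 < h w - h w0 := sub_pos.2 hw
  set Δ0 : ℝ := h w - h w0 with hΔ0def
  set sΔ : ℝ := Real.sqrt Δ0 with hsΔdef
  have hsΔpos : 0 < sΔ := Real.sqrt_pos.2 hΔpos
  have hsΔ2 : sΔ ^ 2 = Δ0 := Real.sq_sqrt hΔpos.le
  set rμ : ℝ := Real.sqrt (2 * μ) with hrμdef
  have hrμpos : 0 < rμ := Real.sqrt_pos.2 (by positivity)
  have hrμ2 : rμ ^ 2 = 2 * μ := Real.sq_sqrt (by positivity)
  -- μ ≤ L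
  have hμL : μ ≤ L := by
    have hd := sd w (-(1 / L) • gradient h w)
    have hi : ⟪gradient h w, -(1 / L) • gradient h w⟫ = -(1 / L) * ‖gradient h w‖ ^ 2 := by
      rw [real_inner_smul_right, real_inner_self_eq_norm_sq]
    have hn : ‖-(1 / L) • gradient h w‖ ^ 2 = (1 / L) ^ 2 * ‖gradient h w‖ ^ 2 := by
      rw [norm_smul, Real.norm_eq_abs, abs_neg,
        abs_of_pos (by positivity : (0:ℝ) < 1 / L), mul_pow]
    rw [hi, hn] at hd
    have hlow := hmin (w + -(1 / L) • gradient h w)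
    have hpl := hPL w
    have hL' : (0:ℝ) < 1 / L := by positivity
    have hkey : ‖gradient h w‖ ^ 2 ≤ 2 * L * Δ0 := by
      have e : L / 2 * ((1 / L) ^ 2 * ‖gradient h w‖ ^ 2) =
          1 / (2 * L) * ‖gradient h w‖ ^ 2 := by field_simp
      rw [e] at hd
      have : h w0 ≤ h w + -(1 / L) * ‖gradient h w‖ ^ 2
          + 1 / (2 * L) * ‖gradient h w‖ ^ 2 := le_trans hlow hd
      have e2 : -(1 / L) * ‖gradient h w‖ ^ 2 + 1 / (2 * L) * ‖gradient h w‖ ^ 2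
          = -(1 / (2 * L)) * ‖gradient h w‖ ^ 2 := by field_simp; ring
      have h3 : 1 / (2 * L) * ‖gradient h w‖ ^ 2 ≤ Δ0 := by
        rw [hΔ0def]; linarith
      have h4 : (2 * L) * (1 / (2 * L) * ‖gradient h w‖ ^ 2) ≤ (2 * L) * Δ0 :=
        mul_le_mul_of_nonneg_left h3 (by positivity)
      have h5 : (2 * L) * (1 / (2 * L) * ‖gradient h w‖ ^ 2) = ‖gradient h w‖ ^ 2 := by
        field_simp
      calc ‖gradient h w‖ ^ 2 = (2 * L) * (1 / (2 * L) * ‖gradient h w‖ ^ 2) := h5.symm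
        _ ≤ (2 * L) * Δ0 := h4
        _ = 2 * L * Δ0 := by ring
    have hpl' : μ * Δ0 ≤ 1 / 2 * ‖gradient h w‖ ^ 2 := by rw [hΔ0def]; exact hPL w
    nlinarith [hpl', hkey, hΔpos]
  -- approximating minimizers
  have hz : ∀ n : ℕ, ∃ z, h z = h w0 ∧
      ‖w - z‖ ≤ 2 / ((1 - 1 / ((n:ℝ) + 2) / 2) * rμ) * sΔ := by
    intro n
    have hn2 : (0:ℝ) < (n:ℝ) + 2 := by positivity
    have hηpos : (0:ℝ) < 1 / (((n:ℝ) + 2) * L) := by positivity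
    have hLη : L * (1 / (((n:ℝ) + 2) * L)) = 1 / ((n:ℝ) + 2) := by field_simp
    have hηL : L * (1 / (((n:ℝ) + 2) * L)) ≤ 1 := by
      rw [hLη, div_le_one hn2]; linarith
    have hημ : 2 * μ * (1 / (((n:ℝ) + 2) * L)) ≤ 1 := by
      rw [mul_one_div, div_le_one (by positivity)]
      nlinarith [Nat.cast_nonneg (α := ℝ) n]
    obtain ⟨z, hz1, hz2⟩ := gr (1 / (((n:ℝ) + 2) * L)) hηpos hηL hημ w
    rw [hLη] at hz2
    exact ⟨z, hz1, hz2⟩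
  choose z hz1 hz2 using hz
  -- uniform bound
  set R : ℝ := 8 / (3 * rμ) * sΔ with hRdef
  have hden34 : ∀ n : ℕ, (3:ℝ)/4 ≤ 1 - 1 / ((n:ℝ) + 2) / 2 := by
    intro n
    have hn2 : (2:ℝ) ≤ (n:ℝ) + 2 := by
      have := Nat.cast_nonneg (α := ℝ) n; linarith
    have : 1 / ((n:ℝ) + 2) ≤ 1 / 2 := by
      apply one_div_le_one_div_of_le <;> linarith
    linarith
  have hmem : ∀ n, z n ∈ Metric.closedBall w R := by
    intro n
    rw [Metric.mem_closedBall, dist_eq_norm, ← norm_sub_rev]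
    calc ‖w - z n‖ ≤ 2 / ((1 - 1 / ((n:ℝ) + 2) / 2) * rμ) * sΔ := hz2 n
      _ ≤ 2 / ((3:ℝ)/4 * rμ) * sΔ := by
          apply mul_le_mul_of_nonneg_right _ hsΔpos.le
          apply div_le_div_of_nonneg_left (by norm_num) (by positivity)
          exact mul_le_mul_of_nonneg_right (hden34 n) hrμpos.le
      _ = 8 / (3 * rμ) * sΔ := by
          rw [div_mul_eq_div_div, div_mul_eq_div_div]
          norm_num
      _ = R := rfl
  obtain ⟨zs, _, φ, hφ, hzlim⟩ := (isCompact_closedBall w R).tendsto_subseq hmem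
  refine ⟨zs, ?_, ?_⟩
  · have h1 : Filter.Tendsto (fun j => h (z (φ j))) Filter.atTop (nhds (h zs)) :=
      (hdiff.continuous.tendsto zs).comp hzlim
    have h2 : (fun j => h (z (φ j))) = fun _ => h w0 := funext fun j => hz1 _
    rw [h2] at h1
    exact tendsto_nhds_unique h1 tendsto_const_nhds
  · have hnormlim : Filter.Tendsto (fun j => ‖w - z (φ j)‖) Filter.atTop
        (nhds ‖w - zs‖) :=
      ((continuous_const.sub continuous_id).norm.tendsto zs).comp hzlim
    have hinvlim : Filter.Tendsto (fun n : ℕ => 1 / ((n:ℝ) + 2)) Filter.atTop (nhds 0) := by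
      have h8 := (Filter.tendsto_add_atTop_iff_nat 1).2
        (tendsto_one_div_add_atTop_nhds_zero_nat (𝕜 := ℝ))
      refine h8.congr fun n => ?_
      push_cast
      ring
    have hdenlim : Filter.Tendsto (fun n : ℕ => (1 - 1 / ((n:ℝ) + 2) / 2) * rμ)
        Filter.atTop (nhds rμ) := by
      have h9 : Filter.Tendsto (fun n : ℕ => 1 / ((n:ℝ) + 2) / 2) Filter.atTop (nhds 0) := by
        simpa using hinvlim.div_const 2
      have h10 := (h9.const_sub (1:ℝ)).mul_const rμ
      simpa using h10
    have hClim : Filter.Tendsto (fun n : ℕ => 2 / ((1 - 1 / ((n:ℝ) + 2) / 2) * rμ) * sΔ)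
        Filter.atTop (nhds (2 / rμ * sΔ)) :=
      (tendsto_const_nhds.div hdenlim hrμpos.ne').mul_const sΔ
    have hle : ‖w - zs‖ ≤ 2 / rμ * sΔ :=
      le_of_tendsto_of_tendsto' hnormlim (hClim.comp hφ.tendsto_atTop)
        (fun j => hz2 (φ j))
    have hsq : ‖w - zs‖ ^ 2 ≤ (2 / rμ * sΔ) ^ 2 :=
      pow_le_pow_left₀ (norm_nonneg _) hle 2
    have he : (2 / rμ * sΔ) ^ 2 = 4 / (2 * μ) * Δ0 := by
      rw [mul_pow, div_pow, hrμ2, hsΔ2]; norm_num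
    rw [he] at hsq
    have h6 : μ / 2 * ‖w - zs‖ ^ 2 ≤ μ / 2 * (4 / (2 * μ) * Δ0) :=
      mul_le_mul_of_nonneg_left hsq (by positivity)
    have h7 : μ / 2 * (4 / (2 * μ) * Δ0) = Δ0 := by field_simp; ring
    rw [hΔ0def] at *
    linarith
end

section
/- Let f₁, …, fₙ : ℝ^{d2} → ℝ be differentiable functions each ρ-strongly concave and G-Lipschitz on a closed convex set V. Fix i ∈ [n], and let f'ᵢ be another ρ-strongly concave, G-Lipschitz differentiable function. Let v̂ maximize F(v) = (1/n)∑ⱼ fⱼ(v) over V and v̂' maximize F'(v) = F(v) + (1/n)(f'ᵢ(v) − fᵢ(v)) over V. Then ‖v̂ − v̂'‖ ≤ 4G/(ρn). -/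
/-- Argument stability of the maximizer of an average of strongly concave
Lipschitz functions when one summand is replaced. -/
theorem stability_of_strongly_concave_maximizer
    {d : ℕ} (n : ℕ) (hn : 0 < n)
    (f : Fin n → EuclideanSpace ℝ (Fin d) → ℝ)
    (i : Fin n) (f' : EuclideanSpace ℝ (Fin d) → ℝ)
    (ρ G : ℝ) (hρ : 0 < ρ) (hG : 0 ≤ G)
    (V : Set (EuclideanSpace ℝ (Fin d))) (hVc : IsClosed V) (hV : Convex ℝ V)
    (hdiff : ∀ j, Differentiable ℝ (f j)) (hdiff' : Differentiable ℝ f')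
    (hconc : ∀ j, StrongConcaveOn V ρ (f j)) (hconc' : StrongConcaveOn V ρ f')
    (hlip : ∀ j, ∀ v ∈ V, ∀ v' ∈ V, |f j v - f j v'| ≤ G * ‖v - v'‖)
    (hlip' : ∀ v ∈ V, ∀ v' ∈ V, |f' v - f' v'| ≤ G * ‖v - v'‖)
    (vhat vhat' : EuclideanSpace ℝ (Fin d)) (hv : vhat ∈ V) (hv' : vhat' ∈ V)
    (hmax : IsMaxOn (fun v => (1 / n : ℝ) * ∑ j, f j v) V vhat)
    (hmax' : IsMaxOn
      (fun v => (1 / n : ℝ) * ∑ j, f j v + (1 / n : ℝ) * (f' v - f i v)) V vhat') :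
    ‖vhat - vhat'‖ ≤ 4 * G / (ρ * n) := by
  set D : ℝ := ‖vhat - vhat'‖ with hD
  have hDnn : 0 ≤ D := norm_nonneg _
  set m : EuclideanSpace ℝ (Fin d) := (1/2 : ℝ) • vhat + (1/2 : ℝ) • vhat' with hm
  have hmV : m ∈ V := hV hv hv' (by norm_num) (by norm_num) (by norm_num)
  have hNpos : (0 : ℝ) < (n : ℝ) := by exact_mod_cast Nat.cast_pos.mpr hn
  -- key strong-concavity inequality at midpoint for each summand
  have key : ∀ g : EuclideanSpace ℝ (Fin d) → ℝ, StrongConcaveOn V ρ g →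
      (1/2) * g vhat + (1/2) * g vhat' + ρ/8 * D^2 ≤ g m := by
    intro g hg
    have := hg.2 hv hv' (by norm_num : (0:ℝ) ≤ 1/2) (by norm_num : (0:ℝ) ≤ 1/2) (by norm_num)
    simp only [smul_eq_mul] at this
    calc (1/2) * g vhat + (1/2) * g vhat' + ρ/8 * D^2
        = (1/2) * g vhat + (1/2) * g vhat' + (1/2) * (1/2) * (ρ/2 * D^2) := by ring
      _ ≤ g m := this
  -- summed inequalities
  have keysum : ∀ s : Finset (Fin n),
      (1/2) * ∑ j ∈ s, f j vhat + (1/2) * ∑ j ∈ s, f j vhat'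
        + (s.card : ℝ) * (ρ/8 * D^2) ≤ ∑ j ∈ s, f j m := by
    intro s
    have h := Finset.sum_le_sum (fun j (_ : j ∈ s) => key (f j) (hconc j))
    rw [Finset.sum_add_distrib, Finset.sum_add_distrib, ← Finset.mul_sum, ← Finset.mul_sum,
      Finset.sum_const, nsmul_eq_mul] at h
    exact h
  have h1 := keysum Finset.univ
  have h2 := keysum (Finset.univ.erase i)
  have hcard1 : ((Finset.univ : Finset (Fin n)).card : ℝ) = (n : ℝ) := by simp
  have hcard2 : (((Finset.univ : Finset (Fin n)).erase i).card : ℝ) = (n : ℝ) - 1 := by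
    rw [Finset.card_erase_of_mem (Finset.mem_univ i)]
    simp [Nat.cast_sub hn]
  have herase : ∀ v, ∑ j ∈ Finset.univ.erase i, f j v = ∑ j, f j v - f i v := by
    intro v
    exact Finset.sum_erase_eq_sub (Finset.mem_univ i)
  rw [hcard1] at h1
  rw [hcard2, herase, herase, herase] at h2
  have hkey' := key f' hconc'
  -- maximality at m
  have hmaxm := hmax hmV
  have hmaxm' := hmax' hmV
  simp only [Set.mem_setOf_eq] at hmaxm hmaxm'
  -- clear the 1/n factors
  have hM1 : ∑ j, f j m ≤ ∑ j, f j vhat := by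
    have := mul_le_mul_of_nonneg_left hmaxm hNpos.le
    rw [← mul_assoc, ← mul_assoc, mul_one_div_cancel hNpos.ne', one_mul, one_mul] at this
    exact this
  have hM2 : ∑ j, f j m + (f' m - f i m) ≤ ∑ j, f j vhat' + (f' vhat' - f i vhat') := by
    have := mul_le_mul_of_nonneg_left hmaxm' hNpos.le
    have hinv : (n : ℝ) * (1 / n) = 1 := mul_one_div_cancel hNpos.ne'
    nlinarith [this]
  -- Lipschitz bounds
  have hl1 : f' vhat' - f' vhat ≤ G * D := by
    have := hlip' vhat' hv' vhat hv
    rw [show ‖vhat' - vhat‖ = D by rw [hD, norm_sub_rev]] at this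
    exact (abs_le.mp this).2
  have hl2 : f i vhat - f i vhat' ≤ G * D := by
    have := hlip i vhat hv vhat' hv'
    exact (abs_le.mp this).2
  -- combine
  have hfinal : ρ * (n:ℝ) / 4 * D^2 ≤ 2 * G * D := by nlinarith [h1, h2, hkey', hM1, hM2]
  rcases eq_or_lt_of_le hDnn with hD0 | hDpos
  · rw [← hD0]
    positivity
  · rw [le_div_iff₀ (by positivity)]
    nlinarith [hfinal]
end

section
/- Let F : ℝ^{d1} × V → ℝ be differentiable, where V ⊆ ℝ^{d2} is closed, convex and bounded, F(w,·) is ρ-strongly concave for every w, and suppose for each w the map w ↦ ∇_v F(w, v) is L-Lipschitz in w uniformly in v and v ↦ ∇_v F(w,v) is L-Lipschitz. Let v̂(w) = argmax_{v ∈ V} F(w, v) (well-defined by strong concavity). Then the map w ↦ v̂(w) is (L/ρ)-Lipschitz: ‖v̂(w) − v̂(w')‖ ≤ (L/ρ)‖w − w'‖ for all w, w'. -/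
open Filter Topology

/-- A maximizer of a `ρ`-strongly concave function on a convex set satisfies a quadratic
growth bound. -/
lemma strongConcave_max_quadratic {d : ℕ} {V : Set (EuclideanSpace ℝ (Fin d))}
    {f : EuclideanSpace ℝ (Fin d) → ℝ} {ρ : ℝ}
    (hc : StrongConcaveOn V ρ f) {x : EuclideanSpace ℝ (Fin d)}
    (hx : x ∈ V) (hmax : IsMaxOn f V x) {u : EuclideanSpace ℝ (Fin d)} (hu : u ∈ V) :
    f u + ρ / 2 * ‖u - x‖ ^ 2 ≤ f x := by
  have key : ∀ a : ℝ, a ∈ Set.Ioo (0:ℝ) 1 →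
      f u - f x + (1 - a) * (ρ / 2 * ‖u - x‖ ^ 2) ≤ 0 := by
    intro a ha
    obtain ⟨ha0, ha1⟩ := ha
    have hb0 : (0:ℝ) ≤ 1 - a := by linarith
    have hsum : a + (1 - a) = 1 := by ring
    have h1 := hc.2 hu hx ha0.le hb0 hsum
    have h2 : f (a • u + (1 - a) • x) ≤ f x := hmax (hc.1 hu hx ha0.le hb0 hsum)
    have h3 : a • f u + (1 - a) • f x + a * (1 - a) * (ρ / 2 * ‖u - x‖ ^ 2) ≤ f x :=
      h1.trans h2
    simp only [smul_eq_mul] at h3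
    nlinarith
  -- take the limit a → 0⁺
  have hten : Tendsto (fun a : ℝ => f u - f x + (1 - a) * (ρ / 2 * ‖u - x‖ ^ 2))
      (𝓝[>] (0:ℝ)) (𝓝 (f u - f x + (1 - 0) * (ρ / 2 * ‖u - x‖ ^ 2))) := by
    apply Tendsto.mono_left _ nhdsWithin_le_nhds
    exact (tendsto_const_nhds.add (((tendsto_const_nhds.sub tendsto_id).mul tendsto_const_nhds)))
  have hev : ∀ᶠ a in 𝓝[>] (0:ℝ),
      f u - f x + (1 - a) * (ρ / 2 * ‖u - x‖ ^ 2) ≤ 0 := by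
    filter_upwards [Ioo_mem_nhdsGT_of_mem (by norm_num : (0:ℝ) ∈ Set.Ico (0:ℝ) 1)] with a ha
    exact key a ha
  have := le_of_tendsto hten hev
  simp only [one_mul, sub_zero] at this
  linarith

/-- Lipschitz continuity of the argmax map for a smooth, strongly concave
maximization over a closed bounded convex set. -/
theorem argmax_map_lipschitz
    {d1 d2 : ℕ}
    (F : EuclideanSpace ℝ (Fin d1) → EuclideanSpace ℝ (Fin d2) → ℝ)
    (V : Set (EuclideanSpace ℝ (Fin d2)))
    (hVc : IsClosed V) (hV : Convex ℝ V) (hVb : Bornology.IsBounded V)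
    (hVne : V.Nonempty)
    (ρ L : ℝ) (hρ : 0 < ρ) (hL : 0 < L)
    (hdiff : Differentiable ℝ (fun p : EuclideanSpace ℝ (Fin d1) × EuclideanSpace ℝ (Fin d2) => F p.1 p.2))
    (hconc : ∀ w, StrongConcaveOn V ρ (F w))
    (hlipw : ∀ v w w', ‖gradient (fun v' => F w v') v - gradient (fun v' => F w' v') v‖ ≤ L * ‖w - w'‖)
    (hlipv : ∀ w v v', ‖gradient (fun v'' => F w v'') v - gradient (fun v'' => F w v'') v'‖ ≤ L * ‖v - v'‖)
    (vhat : EuclideanSpace ℝ (Fin d1) → EuclideanSpace ℝ (Fin d2))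
    (hvhat : ∀ w, vhat w ∈ V ∧ IsMaxOn (F w) V (vhat w)) :
    ∀ w w', ‖vhat w - vhat w'‖ ≤ (L / ρ) * ‖w - w'‖ := by
  intro w w'
  set v := vhat w with hv
  set v' := vhat w' with hv'
  obtain ⟨hvV, hvmax⟩ := hvhat w
  obtain ⟨hv'V, hv'max⟩ := hvhat w'
  -- quadratic growth at both maximizers
  have hq1 : F w v' + ρ / 2 * ‖v' - v‖ ^ 2 ≤ F w v :=
    strongConcave_max_quadratic (hconc w) hvV hvmax hv'V
  have hq2 : F w' v + ρ / 2 * ‖v - v'‖ ^ 2 ≤ F w' v' :=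
    strongConcave_max_quadratic (hconc w') hv'V hv'max hvV
  -- the difference function h is (L * ‖w - w'‖)-Lipschitz
  have hdgen : ∀ u, Differentiable ℝ (fun v'' => F u v'') := by
    intro u x
    have h := DifferentiableAt.comp (𝕜 := ℝ) x
      (g := fun p : EuclideanSpace ℝ (Fin d1) × EuclideanSpace ℝ (Fin d2) => F p.1 p.2)
      (f := fun v : EuclideanSpace ℝ (Fin d2) => (u, v))
      (hdiff (u, x)) ((differentiableAt_const u).prodMk differentiableAt_id)
    exact h
  have hdw : Differentiable ℝ (fun v'' => F w v'') := hdgen w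
  have hdw' : Differentiable ℝ (fun v'' => F w' v'') := hdgen w'
  have hdh : Differentiable ℝ (fun v'' => F w v'' - F w' v'') := hdw.sub hdw'
  have hbound : ∀ x : EuclideanSpace ℝ (Fin d2),
      ‖fderiv ℝ (fun v'' => F w v'' - F w' v'') x‖ ≤ L * ‖w - w'‖ := by
    intro x
    have hfd : fderiv ℝ (fun v'' => F w v'' - F w' v'') x =
        fderiv ℝ (fun v'' => F w v'') x - fderiv ℝ (fun v'' => F w' v'') x :=
      fderiv_sub (hdw x) (hdw' x)
    rw [hfd]
    have := hlipw x w w'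
    rw [gradient, gradient, ← map_sub] at this
    rwa [(InnerProductSpace.toDual ℝ (EuclideanSpace ℝ (Fin d2))).symm.norm_map] at this
  have hlip : ‖(F w v - F w' v) - (F w v' - F w' v')‖ ≤ L * ‖w - w'‖ * ‖v - v'‖ :=
    convex_univ.norm_image_sub_le_of_norm_fderiv_le (fun x _ => (hdh x))
      (fun x _ => hbound x) (Set.mem_univ v') (Set.mem_univ v)
  -- combine
  have hnn : ρ * ‖v - v'‖ ^ 2 ≤ L * ‖w - w'‖ * ‖v - v'‖ := by
    have hrw : ‖v' - v‖ = ‖v - v'‖ := by rw [norm_sub_rev]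
    rw [hrw] at hq1
    have h := (le_abs_self ((F w v - F w' v) - (F w v' - F w' v'))).trans hlip
    linarith [hq1, hq2, h]
  rcases eq_or_lt_of_le (norm_nonneg (v - v')) with h0 | h0
  · rw [← h0]
    positivity
  · rw [div_mul_eq_mul_div, le_div_iff₀ hρ]
    nlinarith [hnn, h0, mul_pos h0 h0]
end

section
/- Let F : ℝ^{d1} × V → ℝ be differentiable with V closed convex bounded, F(w,·) ρ-strongly concave for every w, ∇F jointly L-Lipschitz, and suppose F(·, v) satisfies the μ-PL condition for every fixed v, i.e. (1/2)‖∇_w F(w,v)‖² ≥ μ (F(w,v) − min_{w'} F(w',v)). Define R(w) = max_{v ∈ V} F(w, v). Assuming ∇R(w) = ∇_w F(w, v̂(w)) where v̂(w) = argmax_{v∈V} F(w,v) (Danskin's theorem), R satisfies the μ-PL condition: (1/2)‖∇R(w)‖² ≥ μ (R(w) − min_{w'} R(w')). -/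
/-- If F(·,v) satisfies the μ-PL condition for every v and F(w,·) is strongly
concave over the bounded closed convex set V, then the primal function
R(w) = max_{v ∈ V} F(w,v) also satisfies the μ-PL condition
(assuming Danskin's identity for ∇R). -/
theorem primal_function_PL
    {d1 d2 : ℕ}
    (F : EuclideanSpace ℝ (Fin d1) → EuclideanSpace ℝ (Fin d2) → ℝ)
    (V : Set (EuclideanSpace ℝ (Fin d2)))
    (hVc : IsClosed V) (hV : Convex ℝ V) (hVb : Bornology.IsBounded V)
    (hVne : V.Nonempty)
    (ρ L μ : ℝ) (hρ : 0 < ρ) (hL : 0 < L) (hμ : 0 < μ)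
    (hdiff : Differentiable ℝ (fun p : EuclideanSpace ℝ (Fin d1) × EuclideanSpace ℝ (Fin d2) => F p.1 p.2))
    (hconc : ∀ w, StrongConcaveOn V ρ (F w))
    (hsmooth : ∀ w v w' v',
      ‖gradient (fun w'' => F w'' v) w - gradient (fun w'' => F w'' v') w'‖ ^ 2
        + ‖gradient (fun v'' => F w v'') v - gradient (fun v'' => F w' v'') v'‖ ^ 2
      ≤ L ^ 2 * (‖w - w'‖ ^ 2 + ‖v - v'‖ ^ 2))
    (vhat : EuclideanSpace ℝ (Fin d1) → EuclideanSpace ℝ (Fin d2))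
    (hvhat : ∀ w, vhat w ∈ V ∧ IsMaxOn (F w) V (vhat w))
    (R : EuclideanSpace ℝ (Fin d1) → ℝ) (hR : ∀ w, R w = F w (vhat w))
    -- lower boundedness so that the infima are finite
    (hbdd : ∀ v, BddBelow (Set.range fun w => F w v))
    (hbddR : BddBelow (Set.range R))
    -- PL condition for F(·, v), for every fixed v
    (hPL : ∀ w v, μ * (F w v - sInf (Set.range fun w' => F w' v))
      ≤ (1 / 2) * ‖gradient (fun w' => F w' v) w‖ ^ 2)
    -- Danskin's theorem
    (hDanskin : ∀ w, gradient R w = gradient (fun w' => F w' (vhat w)) w) :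
    ∀ w, μ * (R w - sInf (Set.range R)) ≤ (1 / 2) * ‖gradient R w‖ ^ 2 := by
  intro w
  rw [hDanskin w]
  refine le_trans ?_ (hPL w (vhat w))
  have h1 : sInf (Set.range fun w' => F w' (vhat w)) ≤ sInf (Set.range R) := by
    apply le_csInf (Set.range_nonempty R)
    rintro _ ⟨w', rfl⟩
    refine le_trans (csInf_le (hbdd (vhat w)) ⟨w', rfl⟩) ?_
    rw [hR w']
    exact (hvhat w').2 ((hvhat w).1)
  have := hR w
  nlinarith [h1]
end
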